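/- Let q ≥ 16n⁴ be a real number. Let r⁰ ∈ ℝⁿ, let α¹,…,αⁿ ∈ ℝⁿ satisfy ‖αʲ‖_D = 1 and ⟨r⁰, αʲ⟩_D = 0 for all j, and let β₁,…,βₙ ∈ ℝ. Let λ ∈ ℝⁿ with λ ≥ 0 componentwise, set α := Σ_{j=1}^n λ_j αʲ and β := Σ_{j=1}^n λ_j β_j, and assume ‖α‖_D = 1, β > 0, and |β_j| ≤ β whenever λ_j > 0. Let z := r⁰ + βα and assume ‖z‖_D ≤ 2√n. Let λ̂ ∈ ℝⁿ satisfy |λ̂_j − λ_j| ≤ 1/(2q) for all j and λ̂_j = 0 whenever λ_j = 0, and set γ := Σ_{j=1}^n λ̂_j αʲ and δ := Σ_{j=1}^n λ̂_j β_j. Then ‖α − γ‖_D ≤ n/(2q), |β − δ| ≤ nβ/(2q), δ > 0, γ ≠ 0, and the point z̃ := r⁰ + (δ/‖γ‖_D²)·γ satisfies ‖z‖_D² − ‖z̃‖_D² ≤ 1/(2n²). -/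

import Mathlib

open Matrix

open scoped RealInnerProductSpace in
set_option maxHeartbeats 1000000 in
theorem claim3_aux {E : Type*} [NormedAddCommGroup E] [InnerProductSpace ℝ E]
    {n : ℕ} (hn : 0 < n)
    (q : ℝ) (hq : 16 * (n : ℝ) ^ 4 ≤ q)
    (r0 : E) (α : Fin n → E) (β : Fin n → ℝ)
    (hαorth : ∀ j, ⟪r0, α j⟫ = 0)
    (hαunit : ∀ j, ⟪α j, α j⟫ = 1)
    (lam : Fin n → ℝ) (hlam : ∀ j, 0 ≤ lam j)
    (a : E) (ha : a = ∑ j, lam j • α j)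
    (bb : ℝ) (hbb : bb = ∑ j, lam j * β j)
    (haunit : ⟪a, a⟫ = 1) (hbbpos : 0 < bb)
    (hβbound : ∀ j, 0 < lam j → |β j| ≤ bb)
    (z : E) (hz : z = r0 + bb • a)
    (hznorm : Real.sqrt ⟪z, z⟫ ≤ 2 * Real.sqrt (n : ℝ))
    (lamh : Fin n → ℝ)
    (hlamh : ∀ j, |lamh j - lam j| ≤ 1 / (2 * q))
    (hlamh0 : ∀ j, lam j = 0 → lamh j = 0)
    (γ : E) (hγ : γ = ∑ j, lamh j • α j)
    (δ : ℝ) (hδ : δ = ∑ j, lamh j * β j)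
    (g : ℝ) (hg : g = ⟪γ, γ⟫)
    (zt : E) (hzt : zt = r0 + (δ / g) • γ) :
    Real.sqrt ⟪a - γ, a - γ⟫ ≤ (n : ℝ) / (2 * q) ∧
    |bb - δ| ≤ (n : ℝ) * bb / (2 * q) ∧
    0 < δ ∧ γ ≠ 0 ∧
    ⟪z, z⟫ - ⟪zt, zt⟫ ≤ 1 / (2 * (n : ℝ) ^ 2) := by
  have hn1 : (1 : ℝ) ≤ (n : ℝ) := by exact_mod_cast hn
  have hn4 : (n : ℝ) ≤ (n : ℝ) ^ 4 := le_self_pow₀ hn1 (by norm_num)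
  have hq16n : 16 * (n : ℝ) ≤ q := by linarith
  have hq0 : (0 : ℝ) < q := by linarith
  have hαnorm : ∀ j, ‖α j‖ = 1 := by
    intro j
    have h := hαunit j
    rw [real_inner_self_eq_norm_sq] at h
    rw [← Real.sqrt_one, ← h, Real.sqrt_sq (norm_nonneg _)]
  have hanorm : ‖a‖ = 1 := by
    have h := haunit
    rw [real_inner_self_eq_norm_sq] at h
    rw [← Real.sqrt_one, ← h, Real.sqrt_sq (norm_nonneg _)]
  rw [real_inner_self_eq_norm_sq, Real.sqrt_sq (norm_nonneg z)] at hznorm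
  -- Part 1
  have hε : ∀ j, |lam j - lamh j| ≤ 1 / (2 * q) := by
    intro j; rw [abs_sub_comm]; exact hlamh j
  have hdiff : a - γ = ∑ j, (lam j - lamh j) • α j := by
    rw [ha, hγ, ← Finset.sum_sub_distrib]
    congr 1; ext j; rw [sub_smul]
  have h1 : ‖a - γ‖ ≤ (n : ℝ) / (2 * q) := by
    rw [hdiff]
    calc ‖∑ j, (lam j - lamh j) • α j‖ ≤ ∑ j, ‖(lam j - lamh j) • α j‖ :=
          norm_sum_le _ _
      _ = ∑ j : Fin n, |lam j - lamh j| := by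
          congr 1; ext j; rw [norm_smul, hαnorm, mul_one, Real.norm_eq_abs]
      _ ≤ ∑ _j : Fin n, 1 / (2 * q) := Finset.sum_le_sum fun j _ => hε j
      _ = (n : ℝ) / (2 * q) := by
          rw [Finset.sum_const, Finset.card_univ, Fintype.card_fin, nsmul_eq_mul]
          ring
  -- Part 2
  have hbd : bb - δ = ∑ j, (lam j - lamh j) * β j := by
    rw [hbb, hδ, ← Finset.sum_sub_distrib]
    congr 1; ext j; rw [sub_mul]
  have h2 : |bb - δ| ≤ (n : ℝ) * bb / (2 * q) := by
    rw [hbd]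
    calc |∑ j, (lam j - lamh j) * β j| ≤ ∑ j, |(lam j - lamh j) * β j| :=
          Finset.abs_sum_le_sum_abs _ _
      _ ≤ ∑ _j : Fin n, bb / (2 * q) := by
          apply Finset.sum_le_sum
          intro j _
          rw [abs_mul]
          rcases eq_or_lt_of_le (hlam j) with h0 | hpos
          · rw [← h0, hlamh0 j h0.symm]
            simp
            positivity
          · calc |lam j - lamh j| * |β j| ≤ (1 / (2 * q)) * bb := by
                  apply mul_le_mul (hε j) (hβbound j hpos) (abs_nonneg _)
                  positivity
              _ = bb / (2 * q) := by ring
      _ = (n : ℝ) * bb / (2 * q) := by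
          rw [Finset.sum_const, Finset.card_univ, Fintype.card_fin, nsmul_eq_mul]
          ring
  -- ε bound
  have hεsmall : (n : ℝ) / (2 * q) ≤ 1 / 32 := by
    rw [div_le_div_iff₀ (by positivity) (by norm_num)]
    linarith
  -- Part 3
  have hb2 : (n : ℝ) * bb / (2 * q) ≤ bb / 32 := by
    have hmm := mul_le_mul_of_nonneg_right hεsmall hbbpos.le
    calc (n : ℝ) * bb / (2 * q) = ((n : ℝ) / (2 * q)) * bb := by ring
      _ ≤ (1 / 32) * bb := hmm
      _ = bb / 32 := by ring
  have h3 : 0 < δ := by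
    have := (abs_le.mp h2).2
    linarith
  -- Part 4
  have hγlow : 1 - (n : ℝ) / (2 * q) ≤ ‖γ‖ := by
    have := norm_sub_norm_le a γ
    rw [hanorm] at this
    linarith
  have hγup : ‖γ‖ ≤ 1 + (n : ℝ) / (2 * q) := by
    have h := norm_sub_norm_le γ a
    rw [hanorm, norm_sub_rev] at h
    linarith
  have hγpos : 0 < ‖γ‖ := by linarith
  have h4 : γ ≠ 0 := by
    intro h
    rw [h, norm_zero] at hγpos
    exact lt_irrefl _ hγpos
  refine ⟨by rw [real_inner_self_eq_norm_sq, Real.sqrt_sq (norm_nonneg _)]; exact h1,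
    h2, h3, h4, ?_⟩
  -- Part 5
  have horth_a : ⟪r0, a⟫ = 0 := by
    rw [ha, inner_sum]
    apply Finset.sum_eq_zero
    intro j _
    rw [real_inner_smul_right, hαorth j, mul_zero]
  have horth_γ : ⟪r0, γ⟫ = 0 := by
    rw [hγ, inner_sum]
    apply Finset.sum_eq_zero
    intro j _
    rw [real_inner_smul_right, hαorth j, mul_zero]
  have hgval : g = ‖γ‖ ^ 2 := by rw [hg, real_inner_self_eq_norm_sq]
  have hgpos : 0 < g := by rw [hgval]; positivity
  have hgne : g ≠ 0 := ne_of_gt hgpos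
  have hznormsq : ⟪z, z⟫ = ‖r0‖ ^ 2 + bb ^ 2 := by
    rw [real_inner_self_eq_norm_sq, hz, norm_add_sq_real, real_inner_smul_right, horth_a,
      norm_smul, Real.norm_eq_abs, abs_of_pos hbbpos, hanorm]
    ring
  have hztnormsq : ⟪zt, zt⟫ = ‖r0‖ ^ 2 + δ ^ 2 / g := by
    rw [real_inner_self_eq_norm_sq, hzt, norm_add_sq_real, real_inner_smul_right, horth_γ,
      norm_smul, Real.norm_eq_abs, mul_pow, sq_abs, ← hgval]
    field_simp
    ring
  have hbbsq : bb ^ 2 ≤ 4 * (n : ℝ) := by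
    have h2s : ‖z‖ ^ 2 ≤ (2 * Real.sqrt (n : ℝ)) ^ 2 := by
      apply sq_le_sq' _ hznorm
      have h01 : (0:ℝ) ≤ ‖z‖ := norm_nonneg z
      have h02 : (0:ℝ) ≤ 2 * Real.sqrt (n : ℝ) := by positivity
      linarith
    rw [mul_pow, Real.sq_sqrt (by positivity : (0:ℝ) ≤ (n:ℝ))] at h2s
    have hzn := hznormsq
    rw [real_inner_self_eq_norm_sq] at hzn
    have h03 : (0:ℝ) ≤ ‖r0‖ ^ 2 := sq_nonneg _
    linarith
  rw [hznormsq, hztnormsq]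
  have hgoal : bb ^ 2 - δ ^ 2 / g ≤ 1 / (2 * (n : ℝ) ^ 2) := by
    set e : ℝ := (n : ℝ) / (2 * q) with he
    have he0 : 0 ≤ e := by positivity
    have heq : e * (2 * q) = (n : ℝ) := by
      rw [he]; field_simp
    have hgup : g ≤ (1 + e) ^ 2 := by
      rw [hgval]
      exact pow_le_pow_left₀ (norm_nonneg γ) hγup 2
    have hδlow : bb * (1 - e) ≤ δ := by
      have h2' := (abs_le.mp h2).2
      have hnbq : (n : ℝ) * bb / (2 * q) = bb * e := by rw [he]; ring
      rw [hnbq] at h2'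
      linarith
    have h1e : 0 ≤ 1 - e := by linarith [hεsmall]
    have hδ2 : bb ^ 2 * (1 - e) ^ 2 ≤ δ ^ 2 := by
      have h0 : 0 ≤ bb * (1 - e) := mul_nonneg hbbpos.le h1e
      calc bb ^ 2 * (1 - e) ^ 2 = (bb * (1 - e)) ^ 2 := by ring
        _ ≤ δ ^ 2 := pow_le_pow_left₀ h0 hδlow 2
    set u : ℝ := δ ^ 2 / g with hu
    have hug : u * g = δ ^ 2 := by rw [hu]; field_simp
    have hu0 : 0 ≤ u := by positivity
    have hkey : bb ^ 2 * (1 - e) ^ 2 ≤ u * (1 + e) ^ 2 := by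
      calc bb ^ 2 * (1 - e) ^ 2 ≤ δ ^ 2 := hδ2
        _ = u * g := hug.symm
        _ ≤ u * (1 + e) ^ 2 := mul_le_mul_of_nonneg_left hgup hu0
    rcases le_or_gt (bb ^ 2 - u) 0 with hc | hc
    · have : 0 < 1 / (2 * (n : ℝ) ^ 2) := by positivity
      linarith
    · have step1 : bb ^ 2 - u ≤ (bb ^ 2 - u) * (1 + e) ^ 2 := by
        nlinarith [mul_nonneg hc.le he0, mul_nonneg (mul_nonneg hc.le he0) he0]
      have step2 : (bb ^ 2 - u) * (1 + e) ^ 2 ≤ 4 * e * bb ^ 2 := by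
        have hid : (bb ^ 2 - u) * (1 + e) ^ 2 - 4 * e * bb ^ 2
            = bb ^ 2 * (1 - e) ^ 2 - u * (1 + e) ^ 2 := by ring
        linarith [hkey, hid]
      have step3 : 4 * e * bb ^ 2 ≤ 16 * e * (n : ℝ) := by
        have := mul_le_mul_of_nonneg_left hbbsq (by linarith : (0:ℝ) ≤ 4 * e)
        calc 4 * e * bb ^ 2 = (4 * e) * bb ^ 2 := by ring
          _ ≤ (4 * e) * (4 * (n : ℝ)) := this
          _ = 16 * e * (n : ℝ) := by ring
      have step4 : 16 * e * (n : ℝ) ≤ 1 / (2 * (n : ℝ) ^ 2) := by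
        rw [le_div_iff₀ (by positivity)]
        have key : (16 * e * (n : ℝ) * (2 * (n : ℝ) ^ 2)) * q = 16 * (n : ℝ) ^ 4 := by
          linear_combination (16 * (n : ℝ) ^ 3) * heq
        have h' : (16 * e * (n : ℝ) * (2 * (n : ℝ) ^ 2)) * q ≤ 1 * q := by
          rw [key, one_mul]; exact hq
        exact le_of_mul_le_mul_right h' hq0
      linarith
  linarith

set_option maxHeartbeats 1000000 in
/-- Claim 3 of the paper (rounding lemma): rounding the multipliers `λ_j` to within
`1/(2q)` (with `q ≥ 16n⁴`) changes the separating hyperplane, and hence `‖z‖_D²`,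
by a controlled amount. -/
theorem statement11 {n : ℕ} (hn : 0 < n)
    (D : Matrix (Fin n) (Fin n) ℝ) (hD : D.PosDef)
    (q : ℝ) (hq : 16 * (n : ℝ) ^ 4 ≤ q)
    (r0 : Fin n → ℝ) (α : Fin n → Fin n → ℝ) (β : Fin n → ℝ)
    (hαunit : ∀ j, α j ⬝ᵥ D *ᵥ α j = 1)
    (hαorth : ∀ j, r0 ⬝ᵥ D *ᵥ α j = 0)
    (lam : Fin n → ℝ) (hlam : ∀ j, 0 ≤ lam j)
    (a : Fin n → ℝ) (ha : a = ∑ j, lam j • α j)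
    (bb : ℝ) (hbb : bb = ∑ j, lam j * β j)
    (haunit : a ⬝ᵥ D *ᵥ a = 1) (hbbpos : 0 < bb)
    (hβbound : ∀ j, 0 < lam j → |β j| ≤ bb)
    (z : Fin n → ℝ) (hz : z = r0 + bb • a)
    (hznorm : Real.sqrt (z ⬝ᵥ D *ᵥ z) ≤ 2 * Real.sqrt (n : ℝ))
    (lamh : Fin n → ℝ)
    (hlamh : ∀ j, |lamh j - lam j| ≤ 1 / (2 * q))
    (hlamh0 : ∀ j, lam j = 0 → lamh j = 0)
    (γ : Fin n → ℝ) (hγ : γ = ∑ j, lamh j • α j)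
    (δ : ℝ) (hδ : δ = ∑ j, lamh j * β j)
    (zt : Fin n → ℝ) (hzt : zt = r0 + (δ / (γ ⬝ᵥ D *ᵥ γ)) • γ) :
    Real.sqrt ((a - γ) ⬝ᵥ D *ᵥ (a - γ)) ≤ (n : ℝ) / (2 * q) ∧
    |bb - δ| ≤ (n : ℝ) * bb / (2 * q) ∧
    0 < δ ∧ γ ≠ 0 ∧
    z ⬝ᵥ D *ᵥ z - zt ⬝ᵥ D *ᵥ zt ≤ 1 / (2 * (n : ℝ) ^ 2) := by
  letI := D.toNormedAddCommGroup hD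
  letI := D.toInnerProductSpace hD.posSemidef
  have hinner : ∀ x y : Fin n → ℝ, @inner ℝ _ _ x y = x ⬝ᵥ D *ᵥ y := by
    intro x y
    show (D *ᵥ y) ⬝ᵥ star x = _
    simp [dotProduct_comm]
  obtain ⟨g1, g2, g3, g4, g5⟩ :=
    claim3_aux hn q hq r0 α β
      (fun j => by rw [hinner]; exact hαorth j)
      (fun j => by rw [hinner]; exact hαunit j)
      lam hlam a ha bb hbb
      (by rw [hinner]; exact haunit) hbbpos hβbound
      z hz (by rw [hinner]; exact hznorm)
      lamh hlamh hlamh0 γ hγ δ hδ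
      (γ ⬝ᵥ D *ᵥ γ) (hinner γ γ).symm zt hzt
  refine ⟨by rw [← hinner (a - γ) (a - γ)]; exact g1, g2, g3, g4, ?_⟩
  rw [← hinner z z, ← hinner zt zt]
  exact g5
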